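/- Let G = (V,E) be a finite simple graph and let ℓ ≥ 1 be an integer. Let F₁, …, F_ℓ ⊆ E be pairwise disjoint edge sets such that for each i, the graph (V, F_i) is acyclic, and for every edge e ∈ E ∖ (F₁ ∪ ⋯ ∪ F_i) the two endpoints of e are joined by a walk using only edges of F_i (i.e., F_i is a maximal spanning forest of the graph (V, E ∖ (F₁ ∪ ⋯ ∪ F_{i−1}))). Then for every S ⊆ V, |∂S ∩ (F₁ ∪ ⋯ ∪ F_ℓ)| ≥ min(ℓ, |∂S|). -/

import Mathlib

/-- For a simple graph `G` and a vertex set `S`, `edgeCut G S` is the set of edges of `G`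
with exactly one endpoint in `S`. -/
def edgeCut {V : Type*} (G : SimpleGraph V) (S : Set V) : Set (Sym2 V) :=
  {e | e ∈ G.edgeSet ∧ ∃ x ∈ S, ∃ y ∉ S, e = s(x, y)}

/-- Let `G = (V,E)` be a finite simple graph and `ℓ ≥ 1`. Let
`F₁, …, F_ℓ ⊆ E` be pairwise disjoint edge sets such that each `(V, Fᵢ)` is acyclic and,
for every edge `e ∈ E ∖ (F₁ ∪ ⋯ ∪ Fᵢ)`, the endpoints of `e` are joined by a walk using
only edges of `Fᵢ` (so `Fᵢ` is a maximal spanning forest of `(V, E ∖ (F₁ ∪ ⋯ ∪ F_{i−1}))`).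
Then for every `S ⊆ V`, `|∂S ∩ (F₁ ∪ ⋯ ∪ F_ℓ)| ≥ min(ℓ, |∂S|)`. -/
theorem spanning_forests_preserve_cuts {V : Type*} [Fintype V] (G : SimpleGraph V)
    (ℓ : ℕ) (hl : 1 ≤ ℓ) (F : Fin ℓ → Set (Sym2 V))
    (hsub : ∀ i, F i ⊆ G.edgeSet)
    (hdisj : ∀ i j : Fin ℓ, i ≠ j → Disjoint (F i) (F j))
    (hacyclic : ∀ i, (SimpleGraph.fromEdgeSet (F i)).IsAcyclic)
    (hmax : ∀ i : Fin ℓ, ∀ e ∈ G.edgeSet \ (⋃ j ≤ i, F j),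
      ∀ x y : V, e = s(x, y) → (SimpleGraph.fromEdgeSet (F i)).Reachable x y) :
    ∀ S : Set V, min ℓ (edgeCut G S).ncard ≤ (edgeCut G S ∩ ⋃ i, F i).ncard := by
  classical
  intro S
  set C := edgeCut G S with hC
  by_contra hlt
  push_neg at hlt
  rw [lt_min_iff] at hlt
  obtain ⟨hk1, hk2⟩ := hlt
  have hCfin : C.Finite := Set.toFinite _
  -- there is an index i with C ∩ F i = ∅
  have hex : ∃ i : Fin ℓ, C ∩ F i = ∅ := by
    by_contra hall
    push_neg at hall
    have hchoice : ∀ i : Fin ℓ, ∃ e, e ∈ C ∩ F i := by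
      intro i
      exact hall i
    choose f hf using hchoice
    have hinj : Function.Injective (fun i : Fin ℓ => (⟨f i, (hf i).1, Set.mem_iUnion.2 ⟨i, (hf i).2⟩⟩ : ↥(C ∩ ⋃ i, F i))) := by
      intro i j hij
      by_contra hne
      have := (hdisj i j hne).ne_of_mem (hf i).2 (hf j).2
      exact this (congrArg Subtype.val hij)
    have hcard : ℓ ≤ (C ∩ ⋃ i, F i).ncard := by
      have := Nat.card_le_card_of_injective _ hinj
      rwa [Nat.card_coe_set_eq, Nat.card_eq_fintype_card, Fintype.card_fin] at this
    exact absurd hcard (not_le.2 hk1)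
  obtain ⟨i, hi⟩ := hex
  -- there is a cut edge not in any F j
  have hne : ∃ e ∈ C, e ∉ ⋃ j, F j := by
    by_contra h
    push_neg at h
    have : C ∩ ⋃ j, F j = C := Set.inter_eq_self_of_subset_left h
    rw [this] at hk2
    exact lt_irrefl _ hk2
  obtain ⟨e, heC, heF⟩ := hne
  obtain ⟨heG, x, hxS, y, hyS, hexy⟩ := heC
  have hmem : e ∈ G.edgeSet \ (⋃ j ≤ i, F j) := by
    refine ⟨heG, fun h => heF ?_⟩
    simp only [Set.mem_iUnion] at h ⊢
    obtain ⟨j, _, hj⟩ := h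
    exact ⟨j, hj⟩
  have hreach := hmax i e hmem x y hexy
  obtain ⟨p⟩ := hreach
  obtain ⟨d, _, hd1, hd2⟩ := p.exists_boundary_dart S hxS hyS
  have hadj := d.adj
  rw [SimpleGraph.fromEdgeSet_adj] at hadj
  have : s(d.fst, d.snd) ∈ C ∩ F i := by
    refine ⟨⟨hsub i hadj.1, d.fst, hd1, d.snd, hd2, rfl⟩, hadj.1⟩
  rw [hi] at this
  exact this
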